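/- For every r ≥ 1, the polynomial c_r(x|y) = Σ_{i=0}^{min(r,m)} (−1)^{r−i} σ_i(x) p_{r−i}(y) has a unique leading exponent with respect to the dominance order: setting ν_r = (1,…,1 (r times), 0,…,0 | 0,…,0) ∈ ℕ^{m+n} if r ≤ m and ν_r = (1,…,1 | r−m, 0,…,0) if r > m, the coefficient of the monomial with exponent vector ν_r in c_r equals (−1)^{max(r−m,0)} (in particular it is nonzero), and every exponent vector λ ∈ ℕ^{m+n} of a monomial occurring with nonzero coefficient in c_r satisfies λ ≤ ν_r, with λ < ν_r whenever λ ≠ ν_r. -/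

import Mathlib

/-- The substitution `x₁ = t`, `y₁ = t` into a polynomial in the variables
`x₁, …, x_m, y₁, …, y_n`, viewed as a polynomial in `t` (the remaining variables being
constants). -/
noncomputable def substT (K : Type*) [CommSemiring K] (m n : ℕ)
    (f : MvPolynomial (Fin m ⊕ Fin n) K) : Polynomial (MvPolynomial (Fin m ⊕ Fin n) K) :=
  MvPolynomial.aeval (fun i : Fin m ⊕ Fin n =>
    match i with
    | Sum.inl a => if (a : ℕ) = 0
        then (Polynomial.X : Polynomial (MvPolynomial (Fin m ⊕ Fin n) K))
        else Polynomial.C (MvPolynomial.X (Sum.inl a))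
    | Sum.inr b => if (b : ℕ) = 0
        then (Polynomial.X : Polynomial (MvPolynomial (Fin m ⊕ Fin n) K))
        else Polynomial.C (MvPolynomial.X (Sum.inr b))) f

/-- A polynomial in `x₁, …, x_m, y₁, …, y_n` is supersymmetric if it is symmetric in the
`x` variables and in the `y` variables separately, and the derivative with respect to `t`
of the polynomial obtained by substituting `x₁ = t`, `y₁ = t` vanishes. -/
def IsSuperSym (K : Type*) [CommSemiring K] (m n : ℕ)
    (f : MvPolynomial (Fin m ⊕ Fin n) K) : Prop :=
  (∀ σ : Equiv.Perm (Fin m),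
      MvPolynomial.rename (Equiv.sumCongr σ (Equiv.refl (Fin n))) f = f) ∧
    (∀ τ : Equiv.Perm (Fin n),
      MvPolynomial.rename (Equiv.sumCongr (Equiv.refl (Fin m)) τ) f = f) ∧
    Polynomial.derivative (substT K m n f) = 0

/-- The polynomial `c_r(x|y) = Σ_{i=0}^{min(r,m)} (−1)^{r−i} σ_i(x) p_{r−i}(y)`, where
`σ_i` is the `i`-th elementary symmetric polynomial and `p_j` the `j`-th complete
homogeneous symmetric polynomial. -/
noncomputable def cPoly (K : Type*) [CommRing K] (m n : ℕ) (r : ℕ) :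
    MvPolynomial (Fin m ⊕ Fin n) K :=
  ∑ i ∈ Finset.range (min r m + 1),
    (-1 : MvPolynomial (Fin m ⊕ Fin n) K) ^ (r - i) *
      (MvPolynomial.rename Sum.inl (MvPolynomial.esymm (Fin m) K i) *
        MvPolynomial.rename Sum.inr (MvPolynomial.hsymm (Fin n) K (r - i)))

/-- Partial sum of the first `k` coordinates of `μ ∈ ℤ^{m+n}`. -/
def psum (m n : ℕ) (μ : Fin (m + n) → ℤ) (k : ℕ) : ℤ :=
  ∑ i : Fin (m + n), if (i : ℕ) < k then μ i else 0

/-- Dominance order on `ℤ^{m+n}`: `μ ≤ λ` iff all proper initial partial sums of `μ` are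
at most those of `λ`, and the total sums agree. -/
def domLE (m n : ℕ) (μ lam : Fin (m + n) → ℤ) : Prop :=
  (∀ k : ℕ, 1 ≤ k → k < m + n → psum m n μ k ≤ psum m n lam k) ∧
    psum m n μ (m + n) = psum m n lam (m + n)

/-- Strict dominance order. -/
def domLT (m n : ℕ) (μ lam : Fin (m + n) → ℤ) : Prop :=
  domLE m n μ lam ∧ μ ≠ lam

/-- Membership in `X(T)^+`: the first `m` coordinates are weakly decreasing, and the last `n`
coordinates are weakly decreasing. -/
def IsDominant (m n : ℕ) (lam : Fin (m + n) → ℤ) : Prop :=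
  (∀ i j : Fin (m + n), (i : ℕ) ≤ (j : ℕ) → (j : ℕ) < m → lam j ≤ lam i) ∧
    (∀ i j : Fin (m + n), m ≤ (i : ℕ) → (i : ℕ) ≤ (j : ℕ) → lam j ≤ lam i)

/-- Convert the exponent vector of a monomial in `x₁,…,x_m,y₁,…,y_n` into an element of
`ℤ^{m+n}`, the first `m` coordinates being the `x`-exponents, the last `n` the
`y`-exponents. -/
def expVec (m n : ℕ) (d : (Fin m ⊕ Fin n) →₀ ℕ) : Fin (m + n) → ℤ :=
  fun k =>
    if h : (k : ℕ) < m then (d (Sum.inl ⟨(k : ℕ), h⟩) : ℤ)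
    else (d (Sum.inr ⟨(k : ℕ) - m, by have := k.isLt; omega⟩) : ℤ)

/-- The exponent vector `ν_r`: equal to `(1^r, 0^{m−r} | 0^n)` if `r ≤ m`, and to
`(1^m | r−m, 0^{n−1})` if `r > m`. -/
noncomputable def nuExp (m n r : ℕ) : (Fin m ⊕ Fin n) →₀ ℕ :=
  Finsupp.equivFunOnFinite.symm (fun i : Fin m ⊕ Fin n =>
    match i with
    | Sum.inl a => if r ≤ m then (if (a : ℕ) < r then 1 else 0) else 1
    | Sum.inr b => if r ≤ m then 0 else (if (b : ℕ) = 0 then r - m else 0))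

section Aux
open MvPolynomial Finset

variable {K : Type*} [Field K]

/-- product of images of X over a multiset is a monomial -/
lemma prodMapX {n : ℕ} (s : Multiset (Fin n)) :
    ((s.map (X : Fin n → MvPolynomial (Fin n) K)).prod) = monomial s.toFinsupp 1 := by
  induction s using Multiset.induction_on with
  | empty => simp
  | cons a s ih =>
      rw [Multiset.map_cons, Multiset.prod_cons, ih, ← Multiset.singleton_add,
        Multiset.toFinsupp_add, Multiset.toFinsupp_singleton, X, monomial_mul, one_mul]

lemma coeff_hsymm' {n : ℕ} (j : ℕ) (v : Fin n →₀ ℕ) :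
    coeff v (hsymm (Fin n) K j) = if (∑ b, v b) = j then 1 else 0 := by
  rw [hsymm]
  rw [coeff_sum]
  have hterm : ∀ s : Sym (Fin n) j,
      coeff v ((s.1.map (X : Fin n → MvPolynomial (Fin n) K)).prod)
        = if s.1.toFinsupp = v then 1 else 0 := by
    intro s; rw [prodMapX, coeff_monomial]
  simp_rw [hterm]
  have hsumv : (Multiset.card (Finsupp.toMultiset v)) = ∑ b, v b := by
    rw [Finsupp.card_toMultiset, Finsupp.sum_fintype]
    · rfl
    · intro i; rfl
  by_cases h : (∑ b, v b) = j
  · rw [if_pos h]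
    have hs0 : Multiset.card (Finsupp.toMultiset v) = j := by rw [hsumv, h]
    let s0 : Sym (Fin n) j := ⟨Finsupp.toMultiset v, hs0⟩
    rw [Finset.sum_eq_single_of_mem s0 (mem_univ s0)]
    · exact if_pos (Finsupp.toMultiset_toFinsupp v)
    · intro s _ hne
      rw [if_neg]
      intro hEq
      apply hne
      apply Subtype.ext
      have := congrArg Finsupp.toMultiset hEq
      rwa [Multiset.toFinsupp_toMultiset] at this
  · rw [if_neg h]
    apply Finset.sum_eq_zero
    intro s _
    rw [if_neg]
    intro hEq
    apply h
    have := congrArg (fun f => Multiset.card (Finsupp.toMultiset f)) hEq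
    simp only [Multiset.toFinsupp_toMultiset] at this
    rw [hsumv] at this
    rw [← this, s.2]

lemma indicator_apply {m : ℕ} (t : Finset (Fin m)) (b : Fin m) :
    (∑ a ∈ t, Finsupp.single a (1:ℕ)) b = if b ∈ t then 1 else 0 := by
  rw [Finset.sum_apply']
  simp_rw [Finsupp.single_apply]
  exact Finset.sum_ite_eq' t b (fun _ => 1)

lemma coeff_esymm' {m : ℕ} (i : ℕ) (u : Fin m →₀ ℕ) :
    coeff u (esymm (Fin m) K i)
      = if (∀ a, u a ≤ 1) ∧ (∑ a, u a) = i then 1 else 0 := by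
  rw [esymm_eq_sum_monomial, coeff_sum]
  simp_rw [coeff_monomial]
  by_cases h : (∀ a, u a ≤ 1) ∧ (∑ a, u a) = i
  · obtain ⟨h1, h2⟩ := h
    rw [if_pos ⟨h1, h2⟩]
    have hind : (∑ a ∈ u.support, Finsupp.single a (1:ℕ)) = u := by
      ext b
      rw [indicator_apply]
      by_cases hb : b ∈ u.support
      · rw [if_pos hb]
        have := Finsupp.mem_support_iff.mp hb
        have := h1 b
        omega
      · rw [if_neg hb]
        exact (Finsupp.notMem_support_iff.mp hb).symm
    have hcard : u.support.card = i := by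
      have : ∑ a ∈ u.support, (1:ℕ) = ∑ a ∈ u.support, u a := by
        apply Finset.sum_congr rfl
        intro a ha
        have := Finsupp.mem_support_iff.mp ha
        have := h1 a
        omega
      have hsupp : ∑ a ∈ u.support, u a = ∑ a, u a :=
        Finset.sum_subset (Finset.subset_univ _) (by
          intro a _ ha
          exact Finsupp.notMem_support_iff.mp ha)
      calc u.support.card = ∑ a ∈ u.support, 1 := Finset.card_eq_sum_ones _
        _ = ∑ a ∈ u.support, u a := this
        _ = ∑ a, u a := hsupp
        _ = i := h2
    have hmem : u.support ∈ powersetCard i (univ : Finset (Fin m)) := by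
      rw [Finset.mem_powersetCard_univ]; exact hcard
    rw [Finset.sum_eq_single_of_mem _ hmem]
    · rw [if_pos hind]
    · intro t _ hne
      rw [if_neg]
      intro hEq
      apply hne
      have : t = u.support := by
        ext b
        rw [Finsupp.mem_support_iff, ← hEq, indicator_apply]
        by_cases hb : b ∈ t <;> simp [hb]
      rw [this]
  · rw [if_neg h]
    apply Finset.sum_eq_zero
    intro t ht
    rw [if_neg]
    intro hEq
    apply h
    constructor
    · intro a
      rw [← hEq, indicator_apply]
      split <;> omega
    · have hc := Finset.mem_powersetCard_univ.mp ht
      calc (∑ a, u a) = ∑ a : Fin m, (if a ∈ t then 1 else 0) := by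
            apply Finset.sum_congr rfl
            intro a _
            rw [← hEq, indicator_apply]
        _ = t.card := by rw [Finset.sum_ite_mem, Finset.univ_inter, Finset.card_eq_sum_ones t]
        _ = i := hc

noncomputable def dLf (m n : ℕ) (d : (Fin m ⊕ Fin n) →₀ ℕ) : Fin m →₀ ℕ :=
  Finsupp.equivFunOnFinite.symm fun a => d (Sum.inl a)
noncomputable def dRf (m n : ℕ) (d : (Fin m ⊕ Fin n) →₀ ℕ) : Fin n →₀ ℕ :=
  Finsupp.equivFunOnFinite.symm fun b => d (Sum.inr b)

@[simp] lemma dLf_apply (m n : ℕ) (d : (Fin m ⊕ Fin n) →₀ ℕ) (a : Fin m) :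
    dLf m n d a = d (Sum.inl a) := rfl
@[simp] lemma dRf_apply (m n : ℕ) (d : (Fin m ⊕ Fin n) →₀ ℕ) (b : Fin n) :
    dRf m n d b = d (Sum.inr b) := rfl

lemma split_eq_iff {m n : ℕ} (u : Fin m →₀ ℕ) (v : Fin n →₀ ℕ) (d : (Fin m ⊕ Fin n) →₀ ℕ) :
    u.mapDomain Sum.inl + v.mapDomain Sum.inr = d ↔ u = dLf m n d ∧ v = dRf m n d := by
  constructor
  · intro h
    constructor
    · ext a
      have := DFunLike.congr_fun h (Sum.inl a)
      rw [Finsupp.add_apply] at this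
      rw [Finsupp.mapDomain_apply Sum.inl_injective,
        Finsupp.mapDomain_notin_range _ _ (by simp)] at this
      simpa using this
    · ext b
      have := DFunLike.congr_fun h (Sum.inr b)
      rw [Finsupp.add_apply] at this
      rw [Finsupp.mapDomain_apply Sum.inr_injective,
        Finsupp.mapDomain_notin_range _ _ (by simp)] at this
      simpa using this
  · rintro ⟨rfl, rfl⟩
    ext x
    cases x with
    | inl a =>
        simp only [Finsupp.coe_add, Pi.add_apply]
        rw [Finsupp.mapDomain_apply Sum.inl_injective,
          Finsupp.mapDomain_notin_range _ _ (by simp)]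
        simp
    | inr b =>
        simp only [Finsupp.coe_add, Pi.add_apply]
        rw [Finsupp.mapDomain_apply Sum.inr_injective,
          Finsupp.mapDomain_notin_range _ _ (by simp)]
        simp

lemma coeff_rename_mul {m n : ℕ} (p : MvPolynomial (Fin m) K) (q : MvPolynomial (Fin n) K)
    (d : (Fin m ⊕ Fin n) →₀ ℕ) :
    coeff d (rename Sum.inl p * rename Sum.inr q)
      = coeff (dLf m n d) p * coeff (dRf m n d) q := by
  induction p using MvPolynomial.induction_on' with
  | add p1 p2 ih1 ih2 => simp [map_add, add_mul, coeff_add, ih1, ih2]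
  | monomial u a =>
    induction q using MvPolynomial.induction_on' with
    | add q1 q2 ih1 ih2 => simp [map_add, mul_add, coeff_add, ih1, ih2]
    | monomial v b =>
      rw [rename_monomial, rename_monomial, monomial_mul, coeff_monomial,
        coeff_monomial, coeff_monomial]
      by_cases h : u.mapDomain Sum.inl + v.mapDomain Sum.inr = d
      · obtain ⟨h1, h2⟩ := (split_eq_iff u v d).mp h
        rw [if_pos h, if_pos h1, if_pos h2]
      · rw [if_neg h]
        rcases not_and_or.mp (fun hc => h ((split_eq_iff u v d).mpr hc)) with hc | hc
        · rw [if_neg hc, zero_mul]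
        · rw [if_neg hc, mul_zero]

private lemma coeff_cPoly_eq (m n r : ℕ) (d : (Fin m ⊕ Fin n) →₀ ℕ) :
    MvPolynomial.coeff d (cPoly K m n r)
      = ∑ i ∈ Finset.range (min r m + 1), (-1:K)^(r-i) *
          ((if (∀ a, d (Sum.inl a) ≤ 1) ∧ (∑ a, d (Sum.inl a)) = i then 1 else 0) *
           (if (∑ b, d (Sum.inr b)) = r - i then 1 else 0)) := by
  rw [cPoly, coeff_sum]
  apply Finset.sum_congr rfl
  intro i _
  have hC : ((-1 : MvPolynomial (Fin m ⊕ Fin n) K))^(r-i) = C ((-1:K)^(r-i)) := by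
    rw [map_pow, map_neg, map_one]
  rw [hC, coeff_C_mul, coeff_rename_mul, coeff_esymm', coeff_hsymm']
  simp only [dLf_apply, dRf_apply]
  congr

private lemma sum_range_ite_int (N k : ℕ) :
    (∑ i ∈ Finset.range N, if i < k then (1:ℤ) else 0) = ((min k N : ℕ) : ℤ) := by
  induction N with
  | zero => simp
  | succ N ih => rw [Finset.sum_range_succ, ih]; split_ifs <;> push_cast <;> omega

private lemma sum_range_ite_nat (N k : ℕ) :
    (∑ i ∈ Finset.range N, if i < k then (1:ℕ) else 0) = min k N := by
  induction N with
  | zero => simp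
  | succ N ih => rw [Finset.sum_range_succ, ih]; split_ifs <;> omega

private lemma fin_sum_ite_int (N k : ℕ) :
    (∑ a : Fin N, if (a:ℕ) < k then (1:ℤ) else 0) = ((min k N : ℕ) : ℤ) := by
  rw [Fin.sum_univ_eq_sum_range (fun i => if i < k then (1:ℤ) else 0)]
  exact sum_range_ite_int N k

private lemma fin_sum_ite_nat (N k : ℕ) :
    (∑ a : Fin N, if (a:ℕ) < k then (1:ℕ) else 0) = min k N := by
  rw [Fin.sum_univ_eq_sum_range (fun i => if i < k then (1:ℕ) else 0)]
  exact sum_range_ite_nat N k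

private lemma expVec_castAdd (m n : ℕ) (d : (Fin m ⊕ Fin n) →₀ ℕ) (a : Fin m) :
    expVec m n d (Fin.castAdd n a) = (d (Sum.inl a) : ℤ) := by
  rw [expVec, dif_pos (by simpa using a.isLt)]
  congr

private lemma expVec_natAdd (m n : ℕ) (d : (Fin m ⊕ Fin n) →₀ ℕ) (b : Fin n) :
    expVec m n d (Fin.natAdd m b) = (d (Sum.inr b) : ℤ) := by
  rw [expVec, dif_neg (by simp)]
  norm_cast
  congr 1
  rw [Sum.inr.injEq, Fin.ext_iff]
  simp

private lemma psum_expVec (m n : ℕ) (d : (Fin m ⊕ Fin n) →₀ ℕ) (k : ℕ) :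
    psum m n (expVec m n d) k
      = (∑ a : Fin m, if (a:ℕ) < k then (d (Sum.inl a) : ℤ) else 0)
        + ∑ b : Fin n, if m + (b:ℕ) < k then (d (Sum.inr b) : ℤ) else 0 := by
  rw [_root_.psum, Fin.sum_univ_add]
  congr 1
  · apply Finset.sum_congr rfl
    intro a _
    rw [Fin.coe_castAdd, expVec_castAdd]
  · apply Finset.sum_congr rfl
    intro b _
    rw [Fin.coe_natAdd, expVec_natAdd]

private lemma nuExp_inl (m n r : ℕ) (a : Fin m) :
    nuExp m n r (Sum.inl a) = if r ≤ m then (if (a : ℕ) < r then 1 else 0) else 1 := rfl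

private lemma nuExp_inr (m n r : ℕ) (b : Fin n) :
    nuExp m n r (Sum.inr b) = if r ≤ m then 0 else (if (b : ℕ) = 0 then r - m else 0) := rfl

private lemma sum_nuExp_inl (m n r : ℕ) :
    (∑ a : Fin m, nuExp m n r (Sum.inl a)) = min r m := by
  by_cases h : r ≤ m
  · simp_rw [nuExp_inl, if_pos h]
    rw [fin_sum_ite_nat]
    try omega
  · simp_rw [nuExp_inl, if_neg h]
    simp only [Finset.sum_const, Finset.card_univ, Fintype.card_fin, smul_eq_mul, mul_one]
    omega

private lemma sum_nuExp_inr (m n r : ℕ) (hn : 1 ≤ n) :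
    (∑ b : Fin n, nuExp m n r (Sum.inr b)) = r - min r m := by
  by_cases h : r ≤ m
  · simp_rw [nuExp_inr, if_pos h]
    simp
    omega
  · simp_rw [nuExp_inr, if_neg h]
    rw [Finset.sum_eq_single (⟨0, hn⟩ : Fin n)]
    · simp
      omega
    · intro b _ hb
      rw [if_neg]
      simpa [Fin.ext_iff] using hb
    · intro hmem
      exact absurd (Finset.mem_univ _) hmem

private lemma psum_nuExp (m n r : ℕ) (hn : 1 ≤ n) (k : ℕ) :
    psum m n (expVec m n (nuExp m n r)) k
      = ((min k (min r m) : ℕ) : ℤ) + (if m < k then ((r - min r m : ℕ) : ℤ) else 0) := by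
  rw [psum_expVec]
  congr 1
  · by_cases h : r ≤ m
    · have h2 : ∀ a : Fin m, (if (a:ℕ) < k then ((nuExp m n r (Sum.inl a) : ℕ) : ℤ) else 0)
          = if (a:ℕ) < min k r then (1:ℤ) else 0 := by
        intro a
        rw [nuExp_inl, if_pos h]
        split_ifs <;> push_cast <;> omega
      have hmin : min (min k r) m = min k (min r m) := by omega
      rw [Finset.sum_congr rfl (fun a _ => h2 a), fin_sum_ite_int, hmin]
    · have h2 : ∀ a : Fin m, (if (a:ℕ) < k then ((nuExp m n r (Sum.inl a) : ℕ) : ℤ) else 0)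
          = if (a:ℕ) < k then (1:ℤ) else 0 := by
        intro a
        rw [nuExp_inl, if_neg h]
        simp
      have hmin : min k m = min k (min r m) := by omega
      rw [Finset.sum_congr rfl (fun a _ => h2 a), fin_sum_ite_int, hmin]
  · by_cases h : r ≤ m
    · have h2 : ∀ b : Fin n, (if m + (b:ℕ) < k then ((nuExp m n r (Sum.inr b) : ℕ) : ℤ) else 0) = 0 := by
        intro b
        rw [nuExp_inr, if_pos h]
        simp
      rw [Finset.sum_congr rfl (fun b _ => h2 b), Finset.sum_const_zero]
      have : r - min r m = 0 := by omega
      rw [this]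
      simp
    · rw [Finset.sum_eq_single (⟨0, hn⟩ : Fin n)]
      · rw [nuExp_inr, if_neg h]
        simp only [Fin.val_mk, if_pos rfl, Nat.add_zero]
        have : min r m = m := by omega
        rw [this]
        rfl
      · intro b _ hb
        have hz : nuExp m n r (Sum.inr b) = 0 := by
          rw [nuExp_inr, if_neg h, if_neg (by simpa [Fin.ext_iff] using hb)]
        rw [hz]
        simp
      · intro hmem
        exact absurd (Finset.mem_univ _) hmem

private lemma sum_ite_le_cast {N k : ℕ} (f : Fin N → ℕ) :
    (∑ a : Fin N, if (a:ℕ) < k then (f a : ℤ) else 0) ≤ ((∑ a, f a : ℕ) : ℤ) := by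
  push_cast
  apply Finset.sum_le_sum
  intro a _
  split_ifs
  · exact le_refl _
  · positivity

private lemma sum_ite_le_min' {N k : ℕ} (f : Fin N → ℕ) (hf : ∀ a, f a ≤ 1) :
    (∑ a : Fin N, if (a:ℕ) < k then (f a : ℤ) else 0) ≤ ((min k N : ℕ) : ℤ) := by
  rw [← fin_sum_ite_int N k]
  apply Finset.sum_le_sum
  intro a _
  split_ifs
  · exact_mod_cast hf a
  · exact le_refl _

private lemma sum_ite_eq_of_ge {N k : ℕ} (f : Fin N → ℕ) (h : N ≤ k) :
    (∑ a : Fin N, if (a:ℕ) < k then (f a : ℤ) else 0) = ((∑ a, f a : ℕ) : ℤ) := by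
  push_cast
  apply Finset.sum_congr rfl
  intro a _
  rw [if_pos (by omega)]

private lemma sum_ite_shift_zero {N k m : ℕ} (f : Fin N → ℕ) (h : k ≤ m) :
    (∑ b : Fin N, if m + (b:ℕ) < k then (f b : ℤ) else 0) = 0 :=
  Finset.sum_eq_zero (fun b _ => if_neg (by omega))

private lemma sum_ite_shift_le {N k m : ℕ} (f : Fin N → ℕ) :
    (∑ b : Fin N, if m + (b:ℕ) < k then (f b : ℤ) else 0) ≤ ((∑ b, f b : ℕ) : ℤ) := by
  push_cast
  apply Finset.sum_le_sum
  intro b _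
  split_ifs
  · exact le_refl _
  · positivity

private lemma sum_ite_shift_eq {N k m : ℕ} (f : Fin N → ℕ) (h : m + N ≤ k) :
    (∑ b : Fin N, if m + (b:ℕ) < k then (f b : ℤ) else 0) = ((∑ b, f b : ℕ) : ℤ) := by
  push_cast
  apply Finset.sum_congr rfl
  intro b _
  rw [if_pos (by omega)]

end Aux

/-- For `r ≥ 1`, the polynomial `c_r` has a unique leading exponent `ν_r` for the
dominance order: the coefficient of the monomial with exponent `ν_r` is
`(−1)^{max(r−m,0)}` (in particular nonzero), and every exponent vector of a monomial
occurring with nonzero coefficient in `c_r` is `≤ ν_r`, strictly so when different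
from `ν_r`. -/
theorem cPoly_leading (K : Type*) [Field K] (m n : ℕ) (hm : 1 ≤ m) (hn : 1 ≤ n)
    (r : ℕ) (hr : 1 ≤ r) :
    MvPolynomial.coeff (nuExp m n r) (cPoly K m n r) = (-1 : K) ^ (r - m) ∧
      ∀ d : (Fin m ⊕ Fin n) →₀ ℕ, MvPolynomial.coeff d (cPoly K m n r) ≠ 0 →
        domLE m n (expVec m n d) (expVec m n (nuExp m n r)) ∧
          (expVec m n d ≠ expVec m n (nuExp m n r) →
            domLT m n (expVec m n d) (expVec m n (nuExp m n r))) := by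
  have hnu1 : ∀ a, nuExp m n r (Sum.inl a) ≤ 1 := by
    intro a
    rw [nuExp_inl]
    split_ifs <;> omega
  have hnu2 := sum_nuExp_inl m n r
  have hnu3 := sum_nuExp_inr m n r hn
  constructor
  · rw [coeff_cPoly_eq]
    rw [Finset.sum_eq_single (min r m)]
    · rw [if_pos ⟨hnu1, hnu2⟩, if_pos hnu3, mul_one, mul_one]
      have he : r - min r m = r - m := by omega
      rw [he]
    · intro i _ hne
      have hno : ¬((∀ a, nuExp m n r (Sum.inl a) ≤ 1) ∧
          (∑ a, nuExp m n r (Sum.inl a)) = i) := by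
        rintro ⟨-, hsum⟩
        rw [hnu2] at hsum
        exact hne hsum.symm
      rw [if_neg hno, zero_mul, mul_zero]
    · intro h
      exact absurd (Finset.self_mem_range_succ _) h
  · intro d hd
    rw [coeff_cPoly_eq] at hd
    obtain ⟨i, hi, hne⟩ := Finset.exists_ne_zero_of_sum_ne_zero hd
    rw [Finset.mem_range] at hi
    have hprod := (mul_ne_zero_iff.mp hne).2
    obtain ⟨hfst, hsnd⟩ := mul_ne_zero_iff.mp hprod
    have hc1 : (∀ a, d (Sum.inl a) ≤ 1) ∧ (∑ a, d (Sum.inl a)) = i := by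
      by_contra hc
      rw [if_neg hc] at hfst
      exact hfst rfl
    have hc2 : (∑ b, d (Sum.inr b)) = r - i := by
      by_contra hc
      rw [if_neg hc] at hsnd
      exact hsnd rfl
    obtain ⟨h1, h2⟩ := hc1
    have hile : i ≤ min r m := by omega
    have hdom : domLE m n (expVec m n d) (expVec m n (nuExp m n r)) := by
      constructor
      · intro k hk1 hk2
        rw [psum_expVec, psum_nuExp m n r hn]
        have hL1 : (∑ a : Fin m, if (a:ℕ) < k then (d (Sum.inl a) : ℤ) else 0)
            ≤ ((∑ a, d (Sum.inl a) : ℕ) : ℤ) := sum_ite_le_cast _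
        have hL2 : (∑ a : Fin m, if (a:ℕ) < k then (d (Sum.inl a) : ℤ) else 0)
            ≤ ((min k m : ℕ) : ℤ) := sum_ite_le_min' _ h1
        have hR1 : (∑ b : Fin n, if m + (b:ℕ) < k then (d (Sum.inr b) : ℤ) else 0)
            ≤ ((∑ b, d (Sum.inr b) : ℕ) : ℤ) := sum_ite_shift_le _
        rw [h2] at hL1
        rw [hc2] at hR1
        rcases le_or_gt k m with hkm | hkm
        · rw [if_neg (by omega)]
          have hR0 : (∑ b : Fin n, if m + (b:ℕ) < k then (d (Sum.inr b) : ℤ) else 0) = 0 :=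
            sum_ite_shift_zero _ hkm
          rw [hR0]
          omega
        · rw [if_pos hkm]
          omega
      · rw [psum_expVec, psum_nuExp m n r hn]
        have hL : (∑ a : Fin m, if (a:ℕ) < m + n then (d (Sum.inl a) : ℤ) else 0)
            = ((∑ a, d (Sum.inl a) : ℕ) : ℤ) := sum_ite_eq_of_ge _ (by omega)
        have hR : (∑ b : Fin n, if m + (b:ℕ) < m + n then (d (Sum.inr b) : ℤ) else 0)
            = ((∑ b, d (Sum.inr b) : ℕ) : ℤ) := sum_ite_shift_eq _ (by omega)
        rw [hL, hR, h2, hc2, if_pos (by omega)]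
        omega
    exact ⟨hdom, fun hne2 => ⟨hdom, hne2⟩⟩
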